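/- Let h : ℝ^d → ℝ ∪ {+∞} be proper, convex, lower semicontinuous with bounded domain, and let h̃ be its perspective function. Then for (θ,x),(θ*,x*) ∈ ℝ × ℝ^d, one has (θ*,x*) ∈ ∂h̃(θ,x) if and only if either [h*(x*) + θ* ≤ 0 and (θ,x) = (0,0)], or [θ > 0, h*(x*) + θ* = 0, and h(x/θ) + h*(x*) − ⟨x/θ, x*⟩ = 0]. -/

import Mathlib

noncomputable section
open Finset Filter Topology Bornology
open scoped Classical Pointwise

/-- Fenchel conjugate of a function on a finite coordinate space. -/
def conjFn {d : Type*} [Fintype d] (g : (d → ℝ) → EReal) (y : d → ℝ) : EReal :=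
  ⨆ x : d → ℝ, (↑(∑ i, x i * y i) : EReal) - g x

/-- Fenchel conjugate, scalar case. -/
def conjR (g : ℝ → EReal) (y : ℝ) : EReal :=
  ⨆ x : ℝ, (↑(x * y) : EReal) - g x

/-- Subdifferential (empty where `g = ⊤`). -/
def subdiffFn {d : Type*} [Fintype d] (g : (d → ℝ) → EReal) (x : d → ℝ) : Set (d → ℝ) :=
  {p | g x ≠ ⊤ ∧ ∀ x', g x + (↑(∑ i, p i * (x' i - x i)) : EReal) ≤ g x'}

def subdiffR (g : ℝ → EReal) (x : ℝ) : Set ℝ :=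
  {p | g x ≠ ⊤ ∧ ∀ x', g x + (↑(p * (x' - x)) : EReal) ≤ g x'}

def EProper {E : Type*} (g : E → EReal) : Prop := (∃ x, g x ≠ ⊤) ∧ ∀ x, g x ≠ ⊥

def EConvexOn {E : Type*} [AddCommMonoid E] [SMul ℝ E] (g : E → EReal) : Prop :=
  ∀ x y : E, ∀ a b : ℝ, 0 ≤ a → 0 ≤ b → a + b = 1 →
    g (a • x + b • y) ≤ (a : EReal) * g x + (b : EReal) * g y

def EStrictConvexOn {E : Type*} [AddCommMonoid E] [SMul ℝ E] (g : E → EReal) : Prop :=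
  ∀ x y : E, x ≠ y → g x ≠ ⊤ → g y ≠ ⊤ → ∀ a b : ℝ, 0 < a → 0 < b → a + b = 1 →
    g (a • x + b • y) < (a : EReal) * g x + (b : EReal) * g y

/-- Perspective function. -/
def persp {d : Type*} [Fintype d] (h : (d → ℝ) → EReal) (θ : ℝ) (x : d → ℝ) : EReal :=
  if 0 < θ then (θ : EReal) * h (θ⁻¹ • x)
  else if θ = 0 ∧ x = 0 then 0 else ⊤

/-- The simplex `Δ(S)`. -/
def simplex (n : ℕ) : Set (Fin n → ℝ) :=
  {ρ | (∀ y, ρ y ∈ Set.Icc (0 : ℝ) 1) ∧ ∑ y, ρ y = 1}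

abbrev Msp (T n : ℕ) := Fin (T + 1) → Fin n → ℝ
abbrev Wsp (T n : ℕ) := Fin T → Fin n → Fin n → ℝ
abbrev Psp (T : ℕ) := Fin T → ℝ
abbrev Csp (T n : ℕ) := Msp T n × Wsp T n × Msp T n × Psp T
abbrev Ksp (T n : ℕ) := Msp T n × Msp T n × Psp T
abbrev LSp (T n : ℕ) := Fin T → Fin n → (Fin n → ℝ) → EReal
abbrev FSp (T n : ℕ) := Fin (T + 1) → (Fin n → ℝ) → EReal
abbrev PhiSp (T : ℕ) := Fin T → ℝ → EReal
abbrev ASp (T n : ℕ) := Fin T → Fin n → Fin n → ℝ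

variable {T n : ℕ}

def opA (α : ASp T n) (w : Wsp T n) (t : Fin T) : ℝ := ∑ x, ∑ y, w t x y * α t x y

def opS (w : Wsp T n) (s : Fin (T + 1)) (x : Fin n) : ℝ :=
  if h : (s : ℕ) = 0 then 0
  else ∑ y, w ⟨(s : ℕ) - 1, by have := s.isLt; omega⟩ y x

def mbar0 (m0 : Fin n → ℝ) (s : Fin (T + 1)) (x : Fin n) : ℝ := if s = 0 then m0 x else 0

def Qcpl (α : ASp T n) (m : Msp T n) (π : Wsp T n) (t : Fin T) : ℝ :=
  ∑ x, ∑ y, m t.castSucc x * π t x y * α t x y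

def IsKol (m0 : Fin n → ℝ) (π : Wsp T n) (m : Msp T n) : Prop :=
  (∀ x, m 0 x = m0 x) ∧
    ∀ (t : Fin T) (x : Fin n), m t.succ x = ∑ y, m t.castSucc y * π t y x

def InDelta (π : Wsp T n) : Prop := ∀ t x, π t x ∈ simplex n

def ConvAssumption (ℓ : LSp T n) (F : FSp T n) (φ : PhiSp T) : Prop :=
  (∀ t x, EProper (ℓ t x) ∧ EConvexOn (ℓ t x) ∧ LowerSemicontinuous (ℓ t x) ∧
    ∀ ρ, ℓ t x ρ ≠ ⊤ → ρ ∈ simplex n) ∧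
  (∀ s, EProper (F s) ∧ EConvexOn (F s) ∧ LowerSemicontinuous (F s)) ∧
  (∀ t, EProper (φ t) ∧ EConvexOn (φ t) ∧ LowerSemicontinuous (φ t))

def Jpot (ℓ : LSp T n) (F : FSp T n) (φ : PhiSp T) (α : ASp T n)
    (m : Msp T n) (π : Wsp T n) : EReal :=
  (∑ t, ∑ x, (↑(m t.castSucc x) : EReal) * ℓ t x (π t x)) +
    (∑ t, φ t (Qcpl α m π t)) + ∑ s, F s (m s)

def Jtil (ℓ : LSp T n) (F : FSp T n) (φ : PhiSp T) (α : ASp T n)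
    (m : Msp T n) (w : Wsp T n) : EReal :=
  (∑ t, ∑ x, persp (ℓ t x) (m t.castSucc x) (w t x)) +
    (∑ t, φ t (opA α w t)) + ∑ s, F s (m s)

def FeasP (m0 : Fin n → ℝ) (p : Msp T n × Wsp T n) : Prop := InDelta p.2 ∧ IsKol m0 p.2 p.1

def FeasPt (m0 : Fin n → ℝ) (p : Msp T n × Wsp T n) : Prop :=
  ∀ s x, opS p.2 s x - p.1 s x + mbar0 m0 s x = 0

def valP (ℓ : LSp T n) (F : FSp T n) (φ : PhiSp T) (α : ASp T n) (m0 : Fin n → ℝ) : EReal :=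
  ⨅ p ∈ {p : Msp T n × Wsp T n | FeasP m0 p}, Jpot ℓ F φ α p.1 p.2

def valPt (ℓ : LSp T n) (F : FSp T n) (φ : PhiSp T) (α : ASp T n) (m0 : Fin n → ℝ) : EReal :=
  ⨅ p ∈ {p : Msp T n × Wsp T n | FeasPt m0 p}, Jtil ℓ F φ α p.1 p.2

def IsSolP (ℓ : LSp T n) (F : FSp T n) (φ : PhiSp T) (α : ASp T n) (m0 : Fin n → ℝ)
    (p : Msp T n × Wsp T n) : Prop :=
  FeasP m0 p ∧ ∀ q, FeasP m0 q → Jpot ℓ F φ α p.1 p.2 ≤ Jpot ℓ F φ α q.1 q.2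

def IsSolPt (ℓ : LSp T n) (F : FSp T n) (φ : PhiSp T) (α : ASp T n) (m0 : Fin n → ℝ)
    (p : Msp T n × Wsp T n) : Prop :=
  FeasPt m0 p ∧ ∀ q, FeasPt m0 q → Jtil ℓ F φ α p.1 p.2 ≤ Jtil ℓ F φ α q.1 q.2

def dpCost (ℓ : LSp T n) (α : ASp T n) (u : Msp T n) (P : Psp T)
    (t : Fin T) (x : Fin n) : EReal :=
  conjFn (ℓ t x) (fun y => -(α t x y * P t + u t.succ y))

def FeasD (ℓ : LSp T n) (α : ASp T n) (k : Ksp T n) : Prop :=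
  (∀ t x, (↑(k.1 t.castSucc x) : EReal) + dpCost ℓ α k.1 k.2.2 t x ≤ ↑(k.2.1 t.castSucc x)) ∧
  ∀ x, k.1 (Fin.last T) x = k.2.1 (Fin.last T) x

def Dobj (F : FSp T n) (φ : PhiSp T) (m0 : Fin n → ℝ) (k : Ksp T n) : EReal :=
  (↑(∑ x, m0 x * k.1 0 x) : EReal) - (∑ t, conjR (φ t) (k.2.2 t)) -
    ∑ s, conjFn (F s) (k.2.1 s)

def valD (ℓ : LSp T n) (F : FSp T n) (φ : PhiSp T) (α : ASp T n) (m0 : Fin n → ℝ) : EReal :=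
  ⨆ k ∈ {k : Ksp T n | FeasD ℓ α k}, Dobj F φ m0 k

def IsSolD (ℓ : LSp T n) (F : FSp T n) (φ : PhiSp T) (α : ASp T n) (m0 : Fin n → ℝ)
    (k : Ksp T n) : Prop :=
  FeasD ℓ α k ∧ ∀ k', FeasD ℓ α k' → Dobj F φ m0 k' ≤ Dobj F φ m0 k

/-- `IsDP ℓ α γ P u` : `u = U[γ,P]`, i.e. `u` solves the dynamic programming equation. -/
def IsDP (ℓ : LSp T n) (α : ASp T n) (γ : Msp T n) (P : Psp T) (u : Msp T n) : Prop :=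
  (∀ (t : Fin T) (x : Fin n),
    (↑(u t.castSucc x) : EReal) + dpCost ℓ α u P t x = ↑(γ t.castSucc x)) ∧
  ∀ x, u (Fin.last T) x = γ (Fin.last T) x

def valDt (ℓ : LSp T n) (F : FSp T n) (φ : PhiSp T) (α : ASp T n) (m0 : Fin n → ℝ) : EReal :=
  ⨆ k ∈ {k : Ksp T n | IsDP ℓ α k.2.1 k.2.2 k.1}, Dobj F φ m0 k

def IsSolDt (ℓ : LSp T n) (F : FSp T n) (φ : PhiSp T) (α : ASp T n) (m0 : Fin n → ℝ)
    (γ : Msp T n) (P : Psp T) (u : Msp T n) : Prop :=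
  IsDP ℓ α γ P u ∧
    ∀ γ' P' u', IsDP ℓ α γ' P' u' → Dobj F φ m0 (u', γ', P') ≤ Dobj F φ m0 (u, γ, P)

def IsKolPert (m0 : Fin n → ℝ) (ε1 : Msp T n) (π : Wsp T n) (m1 : Msp T n) : Prop :=
  (∀ x, m1 0 x = mbar0 m0 (0 : Fin (T + 1)) x + ε1 0 x) ∧
  ∀ (t : Fin T) (x : Fin n), m1 t.succ x = (∑ y, m1 t.castSucc y * π t y x) - ε1 t.succ x

def qnorm (ε1 ε2 : Msp T n) (ε3 : Psp T) : ℝ :=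
  Real.sqrt ((∑ s, ∑ x, ε1 s x ^ 2) + (∑ s, ∑ x, ε2 s x ^ 2) + ∑ t, ε3 t ^ 2)

def Qualif (ℓ : LSp T n) (F : FSp T n) (φ : PhiSp T) (α : ASp T n) (m0 : Fin n → ℝ) : Prop :=
  ∃ α0 : ℝ, 0 < α0 ∧ ∀ (ε1 ε2 : Msp T n) (ε3 : Psp T), qnorm ε1 ε2 ε3 ≤ α0 →
    ∃ π : Wsp T n, (∀ t x, ℓ t x (π t x) ≠ ⊤) ∧
      ∃ m1 : Msp T n, IsKolPert m0 ε1 π m1 ∧ (∀ s x, 0 ≤ m1 s x) ∧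
        (∀ s, F s (fun x => m1 s x + ε2 s x) ≠ ⊤) ∧
        ∀ t, φ t (Qcpl α m1 π t + ε3 t) ≠ ⊤

def Fobj (ℓ : LSp T n) (F : FSp T n) (φ : PhiSp T) (c : Csp T n) : EReal :=
  (∑ t, ∑ x, persp (ℓ t x) (c.1 t.castSucc x) (c.2.1 t x)) +
    (∑ t, φ t (c.2.2.2 t)) + ∑ s, F s (c.2.2.1 s)

def Gobj (m0 : Fin n → ℝ) (k : Ksp T n) : EReal :=
  if (∀ s x, k.1 s x = -(mbar0 m0 s x)) ∧ k.2.1 = 0 ∧ k.2.2 = 0 then 0 else ⊤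

def Aop (α : ASp T n) (c : Csp T n) : Ksp T n :=
  (fun s x => opS c.2.1 s x - c.1 s x,
   fun s x => c.1 s x - c.2.2.1 s x,
   fun t => opA α c.2.1 t - c.2.2.2 t)

def AstarOp (α : ASp T n) (k : Ksp T n) : Csp T n :=
  (fun s x => k.2.1 s x - k.1 s x,
   fun t x y => α t x y * k.2.2 t + k.1 t.succ y,
   fun s x => -k.2.1 s x,
   fun t => -k.2.2 t)

def cpair (c c' : Csp T n) : ℝ :=
  (∑ s, ∑ x, c.1 s x * c'.1 s x) + (∑ t, ∑ x, ∑ y, c.2.1 t x y * c'.2.1 t x y) +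
    (∑ s, ∑ x, c.2.2.1 s x * c'.2.2.1 s x) + ∑ t, c.2.2.2 t * c'.2.2.2 t

def kpair (k k' : Ksp T n) : ℝ :=
  (∑ s, ∑ x, k.1 s x * k'.1 s x) + (∑ s, ∑ x, k.2.1 s x * k'.2.1 s x) +
    ∑ t, k.2.2 t * k'.2.2 t

def FobjStar (ℓ : LSp T n) (F : FSp T n) (φ : PhiSp T) (c' : Csp T n) : EReal :=
  ⨆ c : Csp T n, (↑(cpair c c') : EReal) - Fobj ℓ F φ c

def GobjStar (m0 : Fin n → ℝ) (k : Ksp T n) : EReal := ↑(-(∑ x, m0 x * k.1 0 x))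

def PfrakObj (ℓ : LSp T n) (F : FSp T n) (φ : PhiSp T) (α : ASp T n) (m0 : Fin n → ℝ)
    (c : Csp T n) : EReal := Fobj ℓ F φ c + Gobj m0 (Aop α c)

def DfrakObj (ℓ : LSp T n) (F : FSp T n) (φ : PhiSp T) (α : ASp T n) (m0 : Fin n → ℝ)
    (k : Ksp T n) : EReal := FobjStar ℓ F φ (-AstarOp α k) + GobjStar m0 k

def IsSolPfrak (ℓ : LSp T n) (F : FSp T n) (φ : PhiSp T) (α : ASp T n) (m0 : Fin n → ℝ)
    (c : Csp T n) : Prop := ∀ c', PfrakObj ℓ F φ α m0 c ≤ PfrakObj ℓ F φ α m0 c'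

def IsSolDfrak (ℓ : LSp T n) (F : FSp T n) (φ : PhiSp T) (α : ASp T n) (m0 : Fin n → ℝ)
    (k : Ksp T n) : Prop := ∀ k', DfrakObj ℓ F φ α m0 k ≤ DfrakObj ℓ F φ α m0 k'

def MFGi (ℓ : LSp T n) (α : ASp T n) (γ : Msp T n) (P : Psp T) (u : Msp T n) : Prop :=
  (∀ (t : Fin T) (x : Fin n), (↑(u t.castSucc x) : EReal) =
      ⨅ ρ ∈ simplex n,
        ℓ t x ρ + ↑(γ t.castSucc x) + ↑(∑ y, ρ y * (α t x y * P t + u t.succ y))) ∧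
  ∀ x, u (Fin.last T) x = γ (Fin.last T) x

def MFGii (ℓ : LSp T n) (α : ASp T n) (π : Wsp T n) (γ : Msp T n) (P : Psp T)
    (u : Msp T n) : Prop :=
  ∀ (t : Fin T) (x : Fin n),
    ℓ t x (π t x) + ↑(γ t.castSucc x) + ↑(∑ y, π t x y * (α t x y * P t + u t.succ y)) =
      (↑(u t.castSucc x) : EReal)

def IsMFGSol (ℓ : LSp T n) (F : FSp T n) (φ : PhiSp T) (α : ASp T n) (m0 : Fin n → ℝ)
    (m : Msp T n) (π : Wsp T n) (u : Msp T n) (γ : Msp T n) (P : Psp T) : Prop :=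
  InDelta π ∧ MFGi ℓ α γ P u ∧ MFGii ℓ α π γ P u ∧ IsKol m0 π m ∧
    (∀ s, γ s ∈ subdiffFn (F s) (m s)) ∧ ∀ t, P t ∈ subdiffR (φ t) (Qcpl α m π t)


lemma my_ereal_cases (a : EReal) : a = ⊥ ∨ a = ⊤ ∨ ∃ r : ℝ, a = (r : EReal) := by
  induction a using EReal.rec with
  | bot => exact Or.inl rfl
  | coe r => exact Or.inr (Or.inr ⟨r, rfl⟩)
  | top => exact Or.inr (Or.inl rfl)

lemma my_conj_bound {d : ℕ} (h : (Fin d → ℝ) → EReal) (xs : Fin d → ℝ) (θs : ℝ)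
    (hle : conjFn h xs + (θs : EReal) ≤ 0) :
    (∀ z, h z ≠ ⊥) ∧ ∀ z (s : ℝ), h z = (s : EReal) → θs + ∑ i, z i * xs i ≤ s := by
  have hne : conjFn h xs ≠ ⊤ := by
    intro hT; rw [hT] at hle; simp at hle
  constructor
  · intro z hz
    have h1 : ((∑ i, z i * xs i : ℝ) : EReal) - h z ≤ conjFn h xs := by
      rw [conjFn]; exact le_iSup (fun w => ((∑ i, w i * xs i : ℝ) : EReal) - h w) z
    rw [hz] at h1
    simp at h1
    exact hne h1
  · intro z s hz
    have h1 : ((∑ i, z i * xs i : ℝ) : EReal) - h z ≤ conjFn h xs := by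
      rw [conjFn]; exact le_iSup (fun w => ((∑ i, w i * xs i : ℝ) : EReal) - h w) z
    rw [hz, ← EReal.coe_sub] at h1
    have h2 : (((∑ i, z i * xs i) - s + θs : ℝ) : EReal) ≤ 0 := by
      calc (((∑ i, z i * xs i) - s + θs : ℝ) : EReal)
          = (((∑ i, z i * xs i) - s : ℝ) : EReal) + (θs : EReal) := by rw [EReal.coe_add]
        _ ≤ conjFn h xs + (θs : EReal) := add_le_add_left h1 _
        _ ≤ 0 := hle
    have h3 : (∑ i, z i * xs i) - s + θs ≤ 0 := by exact_mod_cast h2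
    linarith

lemma my_persp_lower {d : ℕ} (h : (Fin d → ℝ) → EReal) (xs : Fin d → ℝ) (θs : ℝ)
    (hle : conjFn h xs + (θs : EReal) ≤ 0) (θ' : ℝ) (x' : Fin d → ℝ) :
    ((θs * θ' + ∑ i, xs i * x' i : ℝ) : EReal) ≤ persp h θ' x' := by
  obtain ⟨hbot, hkey⟩ := my_conj_bound h xs θs hle
  rw [persp]
  split_ifs with h1 h2
  · rcases my_ereal_cases (h (θ'⁻¹ • x')) with hz | hz | ⟨s, hz⟩
    · exact absurd hz (hbot _)
    · rw [hz, EReal.coe_mul_top_of_pos h1]; exact le_top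
    · rw [hz, ← EReal.coe_mul]
      apply EReal.coe_le_coe_iff.mpr
      have hk := hkey _ s hz
      have hsum : ∑ i, xs i * x' i = θ' * ∑ i, (θ'⁻¹ • x') i * xs i := by
        rw [Finset.mul_sum]
        refine Finset.sum_congr rfl fun i _ => ?_
        rw [Pi.smul_apply, smul_eq_mul]
        field_simp
      rw [hsum]
      nlinarith [mul_le_mul_of_nonneg_left hk h1.le]
  · obtain ⟨h0, hx0⟩ := h2
    subst h0; subst hx0
    simp
  · exact le_top

/-- characterization of the subdifferential of the perspective
function of a proper convex lsc function with bounded domain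
(Lemma 2 of the paper). -/
theorem perspective_subdifferential {d : ℕ} (h : (Fin d → ℝ) → EReal)
    (hproper : EProper h) (hconv : EConvexOn h) (hlsc : LowerSemicontinuous h)
    (hbdd : Bornology.IsBounded {x | h x ≠ ⊤})
    (θ θs : ℝ) (x xs : Fin d → ℝ) :
    (persp h θ x ≠ ⊤ ∧
      ∀ (θ' : ℝ) (x' : Fin d → ℝ),
        persp h θ x + (↑(θs * (θ' - θ) + ∑ i, xs i * (x' i - x i)) : EReal) ≤
          persp h θ' x') ↔
    ((conjFn h xs + (↑θs : EReal) ≤ 0 ∧ θ = 0 ∧ x = 0) ∨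
     (0 < θ ∧ conjFn h xs + (↑θs : EReal) = 0 ∧
        h (θ⁻¹ • x) + conjFn h xs - (↑(∑ i, (θ⁻¹ * x i) * xs i) : EReal) = 0)) := by
  have hSdiff : ∀ (y y' : Fin d → ℝ),
      ∑ i, xs i * (y' i - y i) = (∑ i, xs i * y' i) - ∑ i, xs i * y i := by
    intro y y'
    rw [← Finset.sum_sub_distrib]
    exact Finset.sum_congr rfl fun i _ => by ring
  constructor
  · rintro ⟨hne, hsub⟩
    -- get the real value of persp h θ x
    obtain ⟨p, hp⟩ : ∃ p : ℝ, persp h θ x = (p : EReal) := by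
      rcases my_ereal_cases (persp h θ x) with hb | ht | hc
      · exfalso
        rw [persp] at hb
        split_ifs at hb with h1 h2
        · rcases my_ereal_cases (h (θ⁻¹ • x)) with hz | hz | ⟨s, hz⟩
          · exact hproper.2 _ hz
          · rw [hz, EReal.coe_mul_top_of_pos h1] at hb; simp at hb
          · rw [hz, ← EReal.coe_mul] at hb; exact (EReal.coe_ne_bot _) hb
        · simp at hb
        · simp at hb
      · exact absurd ht hne
      · exact hc
    -- key real inequality
    have key : ∀ M : ℝ, 0 < M → ∀ (z : Fin d → ℝ) (s : ℝ), h z = (s : EReal) →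
        p + (θs * (M - θ) + (M * (∑ i, xs i * z i) - ∑ i, xs i * x i)) ≤ M * s := by
      intro M hM z s hz
      have h1 := hsub M (M • z)
      have hP : persp h M (M • z) = ((M * s : ℝ) : EReal) := by
        rw [persp, if_pos hM, inv_smul_smul₀ (ne_of_gt hM), hz, ← EReal.coe_mul]
      rw [hp, hP, ← EReal.coe_add] at h1
      have h2 : p + (θs * (M - θ) + ∑ i, xs i * ((M • z) i - x i)) ≤ M * s :=
        EReal.coe_le_coe_iff.mp h1
      have hsum : ∑ i, xs i * ((M • z) i - x i)
          = M * (∑ i, xs i * z i) - ∑ i, xs i * x i := by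
        rw [hSdiff]
        congr 1
        rw [Finset.mul_sum]
        exact Finset.sum_congr rfl fun i _ => by
          rw [Pi.smul_apply, smul_eq_mul]; ring
      rw [hsum] at h2
      exact h2
    -- conjugate bound
    have hconj_le : conjFn h xs ≤ ((-θs : ℝ) : EReal) := by
      rw [conjFn]
      apply iSup_le
      intro z
      rcases my_ereal_cases (h z) with hz | hz | ⟨s, hz⟩
      · exact absurd hz (hproper.2 z)
      · rw [hz]; simp
      · rw [hz, ← EReal.coe_sub]
        apply EReal.coe_le_coe_iff.mpr
        by_contra hcon
        push_neg at hcon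
        have hc : ∑ i, xs i * z i = ∑ i, z i * xs i :=
          Finset.sum_congr rfl fun i _ => by ring
        have hδpos : 0 < θs + (∑ i, z i * xs i) - s := by linarith
        have hM : 0 < (|p - θs * θ - ∑ i, xs i * x i| + 1) /
            (θs + (∑ i, z i * xs i) - s) := div_pos (by positivity) hδpos
        have hk := key _ hM z s hz
        rw [hc] at hk
        have hMδ : (|p - θs * θ - ∑ i, xs i * x i| + 1) /
              (θs + (∑ i, z i * xs i) - s) * (θs + (∑ i, z i * xs i) - s)
            = |p - θs * θ - ∑ i, xs i * x i| + 1 :=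
          div_mul_cancel₀ _ (ne_of_gt hδpos)
        nlinarith [neg_abs_le (p - θs * θ - ∑ i, xs i * x i)]
    have hconj_sum_le : conjFn h xs + (θs : EReal) ≤ 0 := by
      calc conjFn h xs + (θs : EReal) ≤ ((-θs : ℝ) : EReal) + (θs : EReal) :=
            add_le_add_left hconj_le _
        _ = ((-θs + θs : ℝ) : EReal) := (EReal.coe_add _ _).symm
        _ = 0 := by norm_num
    by_cases hθ : 0 < θ
    · -- right disjunct
      obtain ⟨r, hr⟩ : ∃ r : ℝ, h (θ⁻¹ • x) = (r : EReal) := by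
        rcases my_ereal_cases (h (θ⁻¹ • x)) with hz | hz | ⟨r, hz⟩
        · exact absurd hz (hproper.2 _)
        · exfalso
          rw [persp, if_pos hθ, hz, EReal.coe_mul_top_of_pos hθ] at hne
          exact hne rfl
        · exact ⟨r, hz⟩
      have hpval : p = θ * r := by
        have hq : persp h θ x = ((θ * r : ℝ) : EReal) := by
          rw [persp, if_pos hθ, hr, ← EReal.coe_mul]
        rw [hp] at hq
        exact_mod_cast hq
      have hSx : ∑ i, xs i * x i = θ * ∑ i, xs i * (θ⁻¹ • x) i := by
        rw [Finset.mul_sum]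
        refine Finset.sum_congr rfl fun i _ => ?_
        rw [Pi.smul_apply, smul_eq_mul]
        field_simp
      have k1 := key (θ + 1) (by linarith) _ r hr
      have k2 := key (θ / 2) (by linarith) _ r hr
      have h1 : θs + (∑ i, xs i * (θ⁻¹ • x) i) ≤ r := by
        rw [hpval, hSx] at k1; nlinarith [k1]
      have h2 : r ≤ θs + (∑ i, xs i * (θ⁻¹ • x) i) := by
        rw [hpval, hSx] at k2; nlinarith [k2, hθ]
      have hδ0 : θs + (∑ i, xs i * (θ⁻¹ • x) i) - r = 0 := by linarith
      have hZc : ∑ i, (θ⁻¹ • x) i * xs i = ∑ i, xs i * (θ⁻¹ • x) i :=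
        Finset.sum_congr rfl fun i _ => by ring
      have hconj_ge : (((∑ i, xs i * (θ⁻¹ • x) i) - r : ℝ) : EReal) ≤ conjFn h xs := by
        have hh : ((∑ i, (θ⁻¹ • x) i * xs i : ℝ) : EReal) - h (θ⁻¹ • x) ≤ conjFn h xs := by
          rw [conjFn]
          exact le_iSup (fun w => ((∑ i, w i * xs i : ℝ) : EReal) - h w) (θ⁻¹ • x)
        rw [hr, ← EReal.coe_sub, hZc] at hh
        exact hh
      have hval : ((∑ i, xs i * (θ⁻¹ • x) i) - r : ℝ) = -θs := by linarith
      have hconj_eq : conjFn h xs = ((-θs : ℝ) : EReal) :=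
        le_antisymm hconj_le (by rw [← hval]; exact hconj_ge)
      refine Or.inr ⟨hθ, ?_, ?_⟩
      · rw [hconj_eq, ← EReal.coe_add]; norm_num
      · rw [hr, hconj_eq, ← EReal.coe_add, ← EReal.coe_sub]
        have hsum2 : ∑ i, (θ⁻¹ * x i) * xs i = ∑ i, xs i * (θ⁻¹ • x) i := by
          refine Finset.sum_congr rfl fun i _ => ?_
          rw [Pi.smul_apply, smul_eq_mul]; ring
        have : r + -θs - ∑ i, (θ⁻¹ * x i) * xs i = 0 := by rw [hsum2]; linarith
        exact_mod_cast this
    · -- left disjunct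
      have hzero : θ = 0 ∧ x = 0 := by
        rw [persp, if_neg hθ] at hne
        by_contra hc
        rw [if_neg hc] at hne
        exact hne rfl
      exact Or.inl ⟨hconj_sum_le, hzero.1, hzero.2⟩
  · rintro (⟨hle, hθ0, hx0⟩ | ⟨hθ, heq, hfen⟩)
    · subst hθ0; subst hx0
      have hp0 : persp h 0 (0 : Fin d → ℝ) = 0 := by rw [persp]; simp
      refine ⟨by rw [hp0]; simp, ?_⟩
      intro θ' x'
      have hcore := my_persp_lower h xs θs hle θ' x'
      have hsimp : θs * (θ' - 0) + ∑ i, xs i * (x' i - (0 : Fin d → ℝ) i)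
          = θs * θ' + ∑ i, xs i * x' i := by simp
      rw [hp0, hsimp, zero_add]
      exact hcore
    · -- from heq : conjFn = -θs
      have heqR : conjFn h xs = ((-θs : ℝ) : EReal) := by
        rcases my_ereal_cases (conjFn h xs) with hb | ht | ⟨c, hc⟩
        · rw [hb] at heq; simp at heq
        · rw [ht] at heq; simp at heq
        · rw [hc, ← EReal.coe_add] at heq
          have hc0 : c + θs = 0 := by exact_mod_cast heq
          rw [hc]
          exact_mod_cast (by linarith : c = -θs)
      rw [heqR] at hfen
      obtain ⟨r, hr, hfr⟩ : ∃ r : ℝ, h (θ⁻¹ • x) = (r : EReal) ∧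
          r + -θs - ∑ i, (θ⁻¹ * x i) * xs i = 0 := by
        rcases my_ereal_cases (h (θ⁻¹ • x)) with hb | ht | ⟨r, hz⟩
        · exact absurd hb (hproper.2 _)
        · rw [ht] at hfen; simp at hfen
        · rw [hz, ← EReal.coe_add, ← EReal.coe_sub] at hfen
          exact ⟨r, hz, by exact_mod_cast hfen⟩
      have hp : persp h θ x = ((θ * r : ℝ) : EReal) := by
        rw [persp, if_pos hθ, hr, ← EReal.coe_mul]
      refine ⟨by rw [hp]; exact EReal.coe_ne_top _, ?_⟩
      intro θ' x'
      rw [hp, ← EReal.coe_add]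
      have hcore := my_persp_lower h xs θs (le_of_eq heq) θ' x'
      refine le_trans (EReal.coe_le_coe_iff.mpr ?_) hcore
      have hSx : ∑ i, xs i * x i = θ * ∑ i, (θ⁻¹ * x i) * xs i := by
        rw [Finset.mul_sum]
        refine Finset.sum_congr rfl fun i _ => ?_
        field_simp
      have hθr : θ * r = θ * θs + θ * ∑ i, (θ⁻¹ * x i) * xs i := by
        nlinarith [hfr]
      rw [hSdiff]
      linarith [hSx, hθr]

end
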